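/- Let T > 0 and K > 0, and for t ∈ [0,T) and x > 0 set G(t,x) := (1/(x √(2π(T−t)))) · exp(−(log(x/K) + (T−t)/2)² / (2(T−t))) (the second derivative ∂²F/∂x² of the Black–Scholes call price function). Then there exists a constant C > 0, depending only on T and K, such that for all t ∈ [0,T): ∫_ℝ e^{4(√t w − t/2)} · G(t, e^{√t w − t/2})² · (2π)^{−1/2} e^{−w²/2} dw ≤ C (T − t)^{−1/2}. In other words, writing X_t := e^{W_t − t/2} for a one-dimensional Brownian motion W, one has E[(X_t² ∂²F/∂x²(t, X_t))²] ≤ C (T−t)^{−1/2}, i.e. in condition (3.2) one may choose θ = 1/4 for the European call pay-off. -/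

import Mathlib

open MeasureTheory Real

/-- The Black–Scholes gamma `G(t,x) = ∂²F/∂x²(t,x)` of the call price function:
`G(t,x) = (1/(x √(2π(T-t)))) exp(-(log(x/K) + (T-t)/2)²/(2(T-t)))`. -/
noncomputable def bsGamma (T K t x : ℝ) : ℝ :=
  (1 / (x * Real.sqrt (2 * Real.pi * (T - t)))) *
    Real.exp (-(Real.log (x / K) + (T - t) / 2) ^ 2 / (2 * (T - t)))

section aux

lemma exp_sq_calc (P y A : ℝ) (hP : 0 < P) :
    Real.exp (4 * y) * ((1 / (Real.exp y * Real.sqrt P)) * Real.exp A) ^ 2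
      = Real.exp (2 * y + 2 * A) / P := by
  have h1 : (Real.exp y * Real.sqrt P) ^ 2 = Real.exp (2 * y) * P := by
    rw [mul_pow, Real.sq_sqrt hP.le, sq, ← Real.exp_add, two_mul]
  rw [mul_pow, div_pow, one_pow, h1, sq, ← Real.exp_add]
  rw [show (2:ℝ) * y + 2 * A = (4 * y + (A + A)) - 2 * y by ring, Real.exp_sub,
    Real.exp_add (4 * y)]
  field_simp [Real.exp_ne_zero]

lemma gauss_int : ∫ w : ℝ, Real.exp (-w ^ 2 / 2) = Real.sqrt (2 * Real.pi) := by
  have h := integral_gaussian (1/2 : ℝ)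
  rw [show Real.pi / (1/2 : ℝ) = 2 * Real.pi by ring] at h
  rw [← h]
  congr 1 with w
  congr 1
  ring

lemma gauss_integrable : Integrable (fun w : ℝ => Real.exp (-w ^ 2 / 2)) := by
  have h : Integrable (fun w : ℝ => Real.exp (-(1/2 : ℝ) * w ^ 2)) :=
    integrable_exp_neg_mul_sq (by norm_num)
  convert h using 2 with w
  ring

lemma shifted_gauss_integrable {σ c s : ℝ} (hσ : σ ≠ 0) (hs : 0 < s) :
    Integrable (fun w : ℝ => Real.exp (-(σ * w + c) ^ 2 / (2 * s))) := by
  have base : Integrable (fun u : ℝ => Real.exp (-(1/(2*s)) * u ^ 2)) :=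
    integrable_exp_neg_mul_sq (by positivity)
  have b2 : Integrable (fun u : ℝ => Real.exp (-(1/(2*s)) * (u + c) ^ 2)) :=
    base.comp_add_right c
  have b3 : Integrable (fun w : ℝ => Real.exp (-(1/(2*s)) * (σ * w + c) ^ 2)) :=
    b2.comp_mul_left' hσ
  convert b3 using 2 with w
  field_simp

lemma shifted_gauss_int {σ c s : ℝ} (hσ : 0 < σ) (hs : 0 < s) :
    ∫ w : ℝ, Real.exp (-(σ * w + c) ^ 2 / (2 * s))
      = σ⁻¹ * (Real.sqrt 2 * Real.sqrt Real.pi * Real.sqrt s) := by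
  have step1 : (∫ w : ℝ, Real.exp (-(σ * w + c) ^ 2 / (2 * s)))
      = ∫ w : ℝ, (fun v : ℝ => Real.exp (-(σ * v) ^ 2 / (2 * s))) (w + c / σ) := by
    congr 1 with w
    simp only
    congr 1
    field_simp
  rw [step1, integral_add_right_eq_self (fun v : ℝ => Real.exp (-(σ * v) ^ 2 / (2 * s)))]
  have step2 : (∫ v : ℝ, Real.exp (-(σ * v) ^ 2 / (2 * s)))
      = ∫ v : ℝ, (fun u : ℝ => Real.exp (-(1/(2*s)) * u ^ 2)) (σ * v) := by
    congr 1 with v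
    simp only
    congr 1
    field_simp
  rw [step2, MeasureTheory.Measure.integral_comp_mul_left
      (fun u : ℝ => Real.exp (-(1/(2*s)) * u ^ 2)) σ, integral_gaussian,
    abs_of_pos (inv_pos.mpr hσ), smul_eq_mul]
  congr 1
  rw [show Real.pi / (1/(2*s)) = 2 * (Real.pi * s) by field_simp,
    Real.sqrt_mul (by norm_num), Real.sqrt_mul Real.pi_pos.le]
  ring

end aux

/-- There is a constant `C > 0`, depending only on `T` and `K`, such that for all
`t ∈ [0,T)`, writing `X_t = e^{√t w - t/2}` with `w` standard normal,
`E[(X_t² ∂²F/∂x²(t,X_t))²] ≤ C (T-t)^{-1/2}`; i.e. in condition (3.2) one can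
choose `θ = 1/4` for the European call pay-off. -/
theorem stmt8 (T K : ℝ) (hT : 0 < T) (hK : 0 < K) :
    ∃ C > 0, ∀ t ∈ Set.Ico 0 T,
      (∫ w : ℝ, Real.exp (4 * (Real.sqrt t * w - t / 2)) *
          (bsGamma T K t (Real.exp (Real.sqrt t * w - t / 2))) ^ 2 *
          (Real.exp (-w ^ 2 / 2) / Real.sqrt (2 * Real.pi)))
        ≤ C * (T - t) ^ (-(1 : ℝ) / 2) := by
  set a := Real.log K with ha
  set A := Real.exp (T + 2 * a) with hA
  have hA0 : 0 < A := Real.exp_pos _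
  refine ⟨A * Real.sqrt 2 / (2 * Real.pi * Real.sqrt T), by positivity, ?_⟩
  intro t ht
  obtain ⟨ht0, htT⟩ := ht
  set s := T - t with hsdef
  have hs : 0 < s := sub_pos.mpr htT
  have hsT : s ≤ T := by rw [hsdef]; linarith
  have h2πs : (0:ℝ) < 2 * Real.pi * s := by positivity
  set σ := Real.sqrt t with hσdef
  have hσ0 : 0 ≤ σ := Real.sqrt_nonneg t
  have hσsq : σ ^ 2 = t := Real.sq_sqrt ht0
  set c : ℝ := -(t/2) - a + s/2 with hc
  clear_value c
  clear_value σ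
  clear_value s
  -- the dominating function
  set g : ℝ → ℝ := fun w =>
    A / (2 * Real.pi * s * Real.sqrt (2 * Real.pi)) *
      (Real.exp (-(σ * w + c) ^ 2 / (2 * s)) * Real.exp (-w ^ 2 / 2)) with hg
  -- rewrite of the integrand
  have hbs : ∀ w : ℝ,
      Real.exp (4 * (σ * w - t / 2)) * (bsGamma T K t (Real.exp (σ * w - t / 2))) ^ 2 *
        (Real.exp (-w ^ 2 / 2) / Real.sqrt (2 * Real.pi))
      = Real.exp (2 * (σ * w - t / 2) - (σ * w + c) ^ 2 / s) / (2 * Real.pi * s) *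
        (Real.exp (-w ^ 2 / 2) / Real.sqrt (2 * Real.pi)) := by
    intro w
    have hlog : Real.log (Real.exp (σ * w - t / 2) / K) = (σ * w - t / 2) - a := by
      rw [Real.log_div (Real.exp_ne_zero _) hK.ne', Real.log_exp, ha]
    simp only [bsGamma, ← hsdef, hlog]
    rw [exp_sq_calc _ _ _ h2πs]
    congr 2
    rw [hc]
    field_simp
    ring
  -- pointwise bound
  have hfg : ∀ w : ℝ,
      Real.exp (4 * (σ * w - t / 2)) * (bsGamma T K t (Real.exp (σ * w - t / 2))) ^ 2 *
        (Real.exp (-w ^ 2 / 2) / Real.sqrt (2 * Real.pi)) ≤ g w := by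
    intro w
    rw [hbs w, hg]
    have key : Real.exp (2 * (σ * w - t / 2) - (σ * w + c) ^ 2 / s)
        ≤ A * Real.exp (-(σ * w + c) ^ 2 / (2 * s)) := by
      rw [hA, ← Real.exp_add, Real.exp_le_exp]
      set u := σ * w + c with hu
      have h4 : 2 * u - 2 * s ≤ u ^ 2 / (2 * s) := by
        rw [le_div_iff₀ (by positivity)]
        nlinarith [sq_nonneg (u - 2 * s)]
      have h5 : u ^ 2 / s = 2 * (u ^ 2 / (2 * s)) := by
        field_simp
      have hyw : σ * w = u - c := by rw [hu]; ring
      rw [hyw, hc, neg_div]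
      linarith [h4, h5, hsT]
    calc Real.exp (2 * (σ * w - t / 2) - (σ * w + c) ^ 2 / s) / (2 * Real.pi * s) *
          (Real.exp (-w ^ 2 / 2) / Real.sqrt (2 * Real.pi))
        ≤ A * Real.exp (-(σ * w + c) ^ 2 / (2 * s)) / (2 * Real.pi * s) *
          (Real.exp (-w ^ 2 / 2) / Real.sqrt (2 * Real.pi)) := by
          gcongr
      _ = A / (2 * Real.pi * s * Real.sqrt (2 * Real.pi)) *
          (Real.exp (-(σ * w + c) ^ 2 / (2 * s)) * Real.exp (-w ^ 2 / 2)) := by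
          ring
  -- integrability of the dominating function
  have hgint : Integrable g := by
    rw [hg]
    apply Integrable.const_mul
    apply Integrable.bdd_mul (c := 1) gauss_integrable
    · exact (Real.continuous_exp.comp (by fun_prop)).aestronglyMeasurable
    · refine Filter.Eventually.of_forall fun w => ?_
      rw [Real.norm_eq_abs, abs_of_pos (Real.exp_pos _)]
      apply Real.exp_le_one_iff.mpr
      exact div_nonpos_of_nonpos_of_nonneg (neg_nonpos_of_nonneg (sq_nonneg _)) (by positivity)
  have step1 : (∫ w : ℝ, Real.exp (4 * (σ * w - t / 2)) *
        (bsGamma T K t (Real.exp (σ * w - t / 2))) ^ 2 *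
        (Real.exp (-w ^ 2 / 2) / Real.sqrt (2 * Real.pi))) ≤ ∫ w, g w := by
    refine integral_mono_of_nonneg (Filter.Eventually.of_forall fun w => ?_) hgint
      (Filter.Eventually.of_forall hfg)
    have h1 : (0:ℝ) < Real.exp (4 * (σ * w - t / 2)) := Real.exp_pos _
    have h2 : (0:ℝ) ≤ (bsGamma T K t (Real.exp (σ * w - t / 2))) ^ 2 := sq_nonneg _
    have h3 : (0:ℝ) ≤ Real.exp (-w ^ 2 / 2) / Real.sqrt (2 * Real.pi) := by positivity
    positivity
  have hgpull : (∫ w, g w) = A / (2 * Real.pi * s * Real.sqrt (2 * Real.pi)) *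
      ∫ w : ℝ, Real.exp (-(σ * w + c) ^ 2 / (2 * s)) * Real.exp (-w ^ 2 / 2) := by
    rw [hg, integral_const_mul]
  have hrpow : s ^ (-(1:ℝ)/2) = (Real.sqrt s)⁻¹ := by
    rw [Real.sqrt_eq_rpow, ← Real.rpow_neg hs.le]
    norm_num
  rw [hrpow]
  have hgoal_eq : A * Real.sqrt 2 / (2 * Real.pi * Real.sqrt T) * (Real.sqrt s)⁻¹
      = A / (2 * Real.pi) * (Real.sqrt 2 / (Real.sqrt T * Real.sqrt s)) := by
    ring
  rw [hgoal_eq]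
  -- case split
  rcases le_or_gt t (T / 2) with hcase | hcase
  · -- s ≥ T/2, bound the shifted gaussian by 1
    have hIle : (∫ w : ℝ, Real.exp (-(σ * w + c) ^ 2 / (2 * s)) * Real.exp (-w ^ 2 / 2))
        ≤ ∫ w : ℝ, Real.exp (-w ^ 2 / 2) := by
      refine integral_mono_of_nonneg (Filter.Eventually.of_forall fun w => by positivity)
        gauss_integrable (Filter.Eventually.of_forall fun w => ?_)
      apply mul_le_of_le_one_left (Real.exp_nonneg _)
      apply Real.exp_le_one_iff.mpr
      exact div_nonpos_of_nonpos_of_nonneg (neg_nonpos_of_nonneg (sq_nonneg _)) (by positivity)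
    have hbound : (∫ w, g w) ≤ A / (2 * Real.pi) * (1 / s) := by
      rw [hgpull]
      calc A / (2 * Real.pi * s * Real.sqrt (2 * Real.pi)) *
            (∫ w : ℝ, Real.exp (-(σ * w + c) ^ 2 / (2 * s)) * Real.exp (-w ^ 2 / 2))
          ≤ A / (2 * Real.pi * s * Real.sqrt (2 * Real.pi)) * Real.sqrt (2 * Real.pi) := by
            rw [gauss_int] at hIle
            gcongr
        _ = A / (2 * Real.pi) * (1 / s) := by
            have h2π : Real.sqrt (2 * Real.pi) ≠ 0 := by positivity
            field_simp
    refine le_trans step1 (le_trans hbound ?_)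
    -- 1/s ≤ √2/(√T √s)
    have hfinal : 1 / s ≤ Real.sqrt 2 / (Real.sqrt T * Real.sqrt s) := by
      rw [div_le_div_iff₀ hs (by positivity)]
      have h1 : Real.sqrt T ≤ Real.sqrt 2 * Real.sqrt s := by
        rw [← Real.sqrt_mul (by norm_num)]
        apply Real.sqrt_le_sqrt
        rw [hsdef]; linarith
      calc 1 * (Real.sqrt T * Real.sqrt s) = Real.sqrt T * Real.sqrt s := by ring
        _ ≤ Real.sqrt 2 * Real.sqrt s * Real.sqrt s := by
            exact mul_le_mul_of_nonneg_right h1 (Real.sqrt_nonneg s)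
        _ = Real.sqrt 2 * s := by rw [mul_assoc, Real.mul_self_sqrt hs.le]
    gcongr
  · -- t > T/2, so σ > 0; integrate the shifted gaussian
    have htpos : 0 < t := by linarith
    have hσpos : 0 < σ := hσdef ▸ Real.sqrt_pos.mpr htpos
    have hIle : (∫ w : ℝ, Real.exp (-(σ * w + c) ^ 2 / (2 * s)) * Real.exp (-w ^ 2 / 2))
        ≤ ∫ w : ℝ, Real.exp (-(σ * w + c) ^ 2 / (2 * s)) := by
      refine integral_mono_of_nonneg (Filter.Eventually.of_forall fun w => by positivity)
        (shifted_gauss_integrable hσpos.ne' hs) (Filter.Eventually.of_forall fun w => ?_)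
      apply mul_le_of_le_one_right (Real.exp_nonneg _)
      apply Real.exp_le_one_iff.mpr
      exact div_nonpos_of_nonpos_of_nonneg (neg_nonpos_of_nonneg (sq_nonneg _)) (by positivity)
    rw [shifted_gauss_int hσpos hs] at hIle
    have hbound : (∫ w, g w) ≤ A / (2 * Real.pi) * (1 / (σ * Real.sqrt s)) := by
      rw [hgpull]
      calc A / (2 * Real.pi * s * Real.sqrt (2 * Real.pi)) *
            (∫ w : ℝ, Real.exp (-(σ * w + c) ^ 2 / (2 * s)) * Real.exp (-w ^ 2 / 2))
          ≤ A / (2 * Real.pi * s * Real.sqrt (2 * Real.pi)) *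
            (σ⁻¹ * (Real.sqrt 2 * Real.sqrt Real.pi * Real.sqrt s)) := by gcongr
        _ = A / (2 * Real.pi) * (1 / (σ * Real.sqrt s)) := by
            have h2π : Real.sqrt (2 * Real.pi) = Real.sqrt 2 * Real.sqrt Real.pi :=
              Real.sqrt_mul (by norm_num) _
            have hss : Real.sqrt s * Real.sqrt s = s := Real.mul_self_sqrt hs.le
            have hsqrt2 : (0:ℝ) < Real.sqrt 2 := by positivity
            have hsqrtpi : (0:ℝ) < Real.sqrt Real.pi := Real.sqrt_pos.mpr Real.pi_pos
            have hsqrts : (0:ℝ) < Real.sqrt s := Real.sqrt_pos.mpr hs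
            rw [h2π]
            field_simp
            linear_combination hss
    refine le_trans step1 (le_trans hbound ?_)
    have hfinal : 1 / (σ * Real.sqrt s) ≤ Real.sqrt 2 / (Real.sqrt T * Real.sqrt s) := by
      have h1 : Real.sqrt T ≤ Real.sqrt 2 * σ := by
        rw [hσdef, ← Real.sqrt_mul (by norm_num)]
        apply Real.sqrt_le_sqrt
        linarith
      rw [div_le_div_iff₀ (by positivity) (by positivity)]
      calc 1 * (Real.sqrt T * Real.sqrt s) = Real.sqrt T * Real.sqrt s := by ring
        _ ≤ Real.sqrt 2 * σ * Real.sqrt s :=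
            mul_le_mul_of_nonneg_right h1 (Real.sqrt_nonneg s)
        _ = Real.sqrt 2 * (σ * Real.sqrt s) := by ring
    gcongr
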